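/- Let H be a linear 3-uniform hypergraph with no Berge k-book. Then H contains a linear subhypergraph H'' with no Berge triangle and at least e(H)/(3k−2) hyperedges. -/

import Mathlib

/-- A Berge triangle in a hypergraph: three distinct vertices and three distinct
hyperedges covering the three vertex pairs cyclically. -/
def HasBergeTriangle {V : Type*} (H : Finset (Finset V)) : Prop :=
  ∃ (v₁ v₂ v₃ : V) (h₁ h₂ h₃ : Finset V),
    v₁ ≠ v₂ ∧ v₂ ≠ v₃ ∧ v₁ ≠ v₃ ∧ h₁ ≠ h₂ ∧ h₂ ≠ h₃ ∧ h₁ ≠ h₃ ∧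
    h₁ ∈ H ∧ h₂ ∈ H ∧ h₃ ∈ H ∧
    v₁ ∈ h₁ ∧ v₂ ∈ h₁ ∧ v₂ ∈ h₂ ∧ v₃ ∈ h₂ ∧ v₃ ∈ h₃ ∧ v₁ ∈ h₃

/-- A Berge `k`-book: `k` Berge triangles on a common base pair `{u,v}`
(base hyperedge `e₀` possibly shared), with all involved hyperedges distinct. -/
def HasBergeBook {V : Type*} (H : Finset (Finset V)) (k : ℕ) : Prop :=
  ∃ (u v : V) (x : Fin k → V) (e₀ : Finset V) (f g : Fin k → Finset V),
    u ≠ v ∧ Function.Injective x ∧ (∀ i, x i ≠ u ∧ x i ≠ v) ∧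
    e₀ ∈ H ∧ u ∈ e₀ ∧ v ∈ e₀ ∧
    (∀ i, f i ∈ H ∧ g i ∈ H ∧ u ∈ f i ∧ x i ∈ f i ∧ v ∈ g i ∧ x i ∈ g i) ∧
    Function.Injective f ∧ Function.Injective g ∧
    (∀ i j, f i ≠ g j) ∧ (∀ i, e₀ ≠ f i ∧ e₀ ≠ g i)

/-- A linear Berge-`k`-book-free 3-uniform hypergraph contains a linear
Berge-triangle-free subhypergraph with at least `e(H)/(3k-2)` hyperedges. -/
lemma matching_lemma {α β : Type*} [DecidableEq α] [DecidableEq β] :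
    ∀ (m : ℕ) (S : Finset α) (A B : α → β), S.card ≤ m →
    (∀ x ∈ S, (S.filter (fun y => A y = A x)).card ≤ 2) →
    (∀ x ∈ S, (S.filter (fun y => B y = B x)).card ≤ 2) →
    (∀ x ∈ S, ∀ y ∈ S, A x ≠ B y) →
    ∃ T, T ⊆ S ∧ S.card ≤ 2 * T.card ∧ Set.InjOn A ↑T ∧ Set.InjOn B ↑T := by
  intro m
  induction m with
  | zero =>
    intro S A B hm _ _ _
    exact ⟨∅, by simp, by simpa using hm, by simp, by simp⟩
  | succ m ih =>
    intro S A B hm hA hB hAB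
    rcases S.eq_empty_or_nonempty with hS | hS
    · exact ⟨∅, by simp, by simp [hS], by simp, by simp⟩
    -- general step given a chosen s
    have key : ∀ s ∈ S,
        ∃ T, T ⊆ S ∧ S.card - (S.filter (fun y => A y = A s) ∪ S.filter (fun y => B y = B s)).card + 2 ≤ 2 * T.card ∧
          Set.InjOn A ↑T ∧ Set.InjOn B ↑T := by
      intro s hs
      set fA := S.filter (fun y => A y = A s) with hfA
      set fB := S.filter (fun y => B y = B s) with hfB
      set F := fA ∪ fB with hF
      have hsfA : s ∈ fA := by simp [hfA, hs]
      have hsF : s ∈ F := Finset.mem_union_left _ hsfA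
      have hS' : (S \ F).card ≤ m := by
        have h1 : (S \ F).card < S.card := by
          apply Finset.card_lt_card
          constructor
          · exact Finset.sdiff_subset
          · intro hsub
            have := hsub hs
            simp [Finset.mem_sdiff, hsF] at this
        omega
      obtain ⟨T', hT'sub, hT'card, hT'A, hT'B⟩ := ih (S \ F) A B hS'
        (fun x hx => le_trans (Finset.card_le_card (Finset.filter_subset_filter _ Finset.sdiff_subset)) (hA x (Finset.sdiff_subset hx)))
        (fun x hx => le_trans (Finset.card_le_card (Finset.filter_subset_filter _ Finset.sdiff_subset)) (hB x (Finset.sdiff_subset hx)))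
        (fun x hx y hy => hAB x (Finset.sdiff_subset hx) y (Finset.sdiff_subset hy))
      have hsT' : s ∉ T' := fun h => by
        have := hT'sub h
        simp [Finset.mem_sdiff, hsF] at this
      have hAne : ∀ y ∈ T', A y ≠ A s := by
        intro y hy hAy
        have hyS := hT'sub hy
        rw [Finset.mem_sdiff] at hyS
        exact hyS.2 (Finset.mem_union_left _ (by simp [hfA, hyS.1, hAy]))
      have hBne : ∀ y ∈ T', B y ≠ B s := by
        intro y hy hBy
        have hyS := hT'sub hy
        rw [Finset.mem_sdiff] at hyS
        exact hyS.2 (Finset.mem_union_right _ (by simp [hfB, hyS.1, hBy]))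
      refine ⟨insert s T', ?_, ?_, ?_, ?_⟩
      · intro y hy
        rcases Finset.mem_insert.mp hy with rfl | hy
        · exact hs
        · exact Finset.sdiff_subset (hT'sub hy)
      · rw [Finset.card_insert_of_notMem hsT']
        have : S.card - F.card ≤ (S \ F).card := by
          have := Finset.card_sdiff_add_card (s := S) (t := F)
          have h2 := Finset.card_le_card (Finset.subset_union_left (s₁ := S) (s₂ := F))
          omega
        omega
      · intro x hx y hy hxy
        simp only [Finset.coe_insert, Set.mem_insert_iff, Finset.mem_coe] at hx hy
        rcases hx with rfl | hx <;> rcases hy with rfl | hy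
        · rfl
        · exact absurd hxy.symm (hAne y hy)
        · exact absurd hxy (hAne x hx)
        · exact hT'A hx hy hxy
      · intro x hx y hy hxy
        simp only [Finset.coe_insert, Set.mem_insert_iff, Finset.mem_coe] at hx hy
        rcases hx with rfl | hx <;> rcases hy with rfl | hy
        · rfl
        · exact absurd hxy.symm (hBne y hy)
        · exact absurd hxy (hBne x hx)
        · exact hT'B hx hy hxy
    -- card bound for F
    have hFbound : ∀ s ∈ S, (S.filter (fun y => A y = A s) ∪ S.filter (fun y => B y = B s)).card + 1 ≤
        (S.filter (fun y => A y = A s)).card + (S.filter (fun y => B y = B s)).card := by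
      intro s hs
      have h1 := Finset.card_union_add_card_inter (S.filter (fun y => A y = A s)) (S.filter (fun y => B y = B s))
      have h2 : s ∈ (S.filter (fun y => A y = A s)) ∩ (S.filter (fun y => B y = B s)) := by simp [hs]
      have h3 := Finset.card_pos.mpr ⟨s, h2⟩
      omega
    by_cases hA1 : ∃ s ∈ S, (S.filter (fun y => A y = A s)).card = 1
    · obtain ⟨s, hs, h1⟩ := hA1
      obtain ⟨T, hT, hc, hIA, hIB⟩ := key s hs
      refine ⟨T, hT, ?_, hIA, hIB⟩
      have := hFbound s hs
      have := hB s hs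
      omega
    by_cases hB1 : ∃ s ∈ S, (S.filter (fun y => B y = B s)).card = 1
    · obtain ⟨s, hs, h1⟩ := hB1
      obtain ⟨T, hT, hc, hIA, hIB⟩ := key s hs
      refine ⟨T, hT, ?_, hIA, hIB⟩
      have := hFbound s hs
      have := hA s hs
      omega
    · -- all A-fibers have card 2, so S.card is even
      push_neg at hA1
      have heven : Even S.card := by
        rw [Finset.card_eq_sum_card_fiberwise (f := A) (t := S.image A)
          (fun x hx => Finset.mem_image_of_mem A hx)]
        apply Finset.even_sum
        intro b hb
        obtain ⟨x, hx, rfl⟩ := Finset.mem_image.mp hb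
        have h1 := hA x hx
        have h2 : 0 < (S.filter (fun y => A y = A x)).card := Finset.card_pos.mpr ⟨x, by simp [hx]⟩
        have h3 := hA1 x hx
        have : (S.filter (fun y => A y = A x)).card = 2 := by omega
        simp [this]
      obtain ⟨s, hs⟩ := hS
      obtain ⟨T, hT, hc, hIA, hIB⟩ := key s hs
      refine ⟨T, hT, ?_, hIA, hIB⟩
      have := hFbound s hs
      have := hA s hs
      have := hB s hs
      rw [Nat.even_iff] at heven
      omega

lemma triangle_normalize {V : Type*} [DecidableEq V] (H'' : Finset (Finset V)) (e : Finset V)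
    (htf : ¬ HasBergeTriangle H'') (ht : HasBergeTriangle (insert e H'')) :
    ∃ (v₁ v₂ v₃ : V) (h₂ h₃ : Finset V),
      v₁ ≠ v₂ ∧ v₂ ≠ v₃ ∧ v₁ ≠ v₃ ∧ e ≠ h₂ ∧ h₂ ≠ h₃ ∧ e ≠ h₃ ∧
      h₂ ∈ H'' ∧ h₃ ∈ H'' ∧
      v₁ ∈ e ∧ v₂ ∈ e ∧ v₂ ∈ h₂ ∧ v₃ ∈ h₂ ∧ v₃ ∈ h₃ ∧ v₁ ∈ h₃ := by
  obtain ⟨v₁, v₂, v₃, h₁, h₂, h₃, n12, n23, n13, e12, e23, e13, m1, m2, m3,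
    a1, a2, a3, a4, a5, a6⟩ := ht
  by_cases c1 : h₁ = e
  · subst c1
    have hm2 : h₂ ∈ H'' := (Finset.mem_insert.mp m2).resolve_left (by exact fun h => e12 h.symm)
    have hm3 : h₃ ∈ H'' := (Finset.mem_insert.mp m3).resolve_left (by exact fun h => e13 h.symm)
    exact ⟨v₁, v₂, v₃, h₂, h₃, n12, n23, n13, e12, e23, e13, hm2, hm3,
      a1, a2, a3, a4, a5, a6⟩
  by_cases c2 : h₂ = e
  · subst c2
    have hm3 : h₃ ∈ H'' := (Finset.mem_insert.mp m3).resolve_left (by exact fun h => e23 h.symm)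
    have hm1 : h₁ ∈ H'' := (Finset.mem_insert.mp m1).resolve_left c1
    exact ⟨v₂, v₃, v₁, h₃, h₁, n23, fun h => n13 h.symm, fun h => n12 h.symm,
      e23, fun h => e13 h.symm, fun h => e12 h.symm, hm3, hm1,
      a3, a4, a5, a6, a1, a2⟩
  by_cases c3 : h₃ = e
  · subst c3
    have hm1 : h₁ ∈ H'' := (Finset.mem_insert.mp m1).resolve_left c1
    have hm2 : h₂ ∈ H'' := (Finset.mem_insert.mp m2).resolve_left c2
    exact ⟨v₃, v₁, v₂, h₁, h₂, fun h => n13 h.symm, n12, fun h => n23 h.symm,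
      fun h => e13 h.symm, e12, fun h => e23 h.symm, hm1, hm2,
      a5, a6, a1, a2, a3, a4⟩
  · exact absurd ⟨v₁, v₂, v₃, h₁, h₂, h₃, n12, n23, n13, e12, e23, e13,
      (Finset.mem_insert.mp m1).resolve_left c1, (Finset.mem_insert.mp m2).resolve_left c2,
      (Finset.mem_insert.mp m3).resolve_left c3, a1, a2, a3, a4, a5, a6⟩ htf

theorem triangle_free_subhypergraph (n k : ℕ) (H : Finset (Finset (Fin n)))
    (hunif : ∀ e ∈ H, e.card = 3)
    (hlin : ∀ e ∈ H, ∀ f ∈ H, e ≠ f → (e ∩ f).card ≤ 1)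
    (hfree : ¬ HasBergeBook H k) :
    ∃ H'' ⊆ H, (∀ e ∈ H'', ∀ f ∈ H'', e ≠ f → (e ∩ f).card ≤ 1) ∧
      ¬ HasBergeTriangle H'' ∧
      (H.card : ℝ) / (3 * (k : ℝ) - 2) ≤ (H''.card : ℝ) := by
  classical
  have hnoTriEmpty : ¬ HasBergeTriangle (∅ : Finset (Finset (Fin n))) := by
    rintro ⟨v1, v2, v3, h1, h2, h3, -, -, -, -, -, -, hm, -⟩
    simp at hm
  rcases Nat.eq_zero_or_pos k with hk0 | hkpos
  · subst hk0
    have hH : H = ∅ := by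
      rcases H.eq_empty_or_nonempty with h | ⟨e, he⟩
      · exact h
      · exfalso
        apply hfree
        have hcard := hunif e he
        have h2 : 1 < e.card := by omega
        obtain ⟨u, hu, v, hv, huv⟩ := Finset.one_lt_card.mp h2
        exact ⟨u, v, Fin.elim0, e, Fin.elim0, Fin.elim0, huv, fun i => i.elim0,
          fun i => i.elim0, he, hu, hv, fun i => i.elim0, fun i => i.elim0,
          fun i => i.elim0, fun i j => i.elim0, fun i => i.elim0⟩
    refine ⟨∅, Finset.empty_subset _, by simp, hnoTriEmpty, ?_⟩
    simp [hH]
  obtain ⟨j, rfl⟩ : ∃ j, k = j + 1 := ⟨k - 1, by omega⟩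
  set 𝒮 := H.powerset.filter (fun S => ¬ HasBergeTriangle S) with h𝒮
  have hS0 : ∅ ∈ 𝒮 := by simp [h𝒮, hnoTriEmpty]
  obtain ⟨H'', hmem, hmax⟩ := Finset.exists_max_image 𝒮 Finset.card ⟨∅, hS0⟩
  rw [h𝒮, Finset.mem_filter, Finset.mem_powerset] at hmem
  obtain ⟨hsub, htf⟩ := hmem
  refine ⟨H'', hsub, fun e he f' hf' => hlin e (hsub he) f' (hsub hf'), htf, ?_⟩
  suffices hcard : H.card ≤ (3 * j + 1) * H''.card by
    have h3' : (0:ℝ) < 3 * (((j:ℕ) + 1 : ℕ) : ℝ) - 2 := by push_cast; linarith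
    rw [div_le_iff₀ h3']
    calc (H.card : ℝ) ≤ ((3 * j + 1) * H''.card : ℕ) := by exact_mod_cast hcard
      _ = (H''.card : ℝ) * (3 * (((j:ℕ) + 1 : ℕ) : ℝ) - 2) := by push_cast; ring
  set R := H \ H'' with hR
  have hRH : R ⊆ H := Finset.sdiff_subset
  have hRH'' : ∀ e ∈ R, e ∉ H'' := fun e he => (Finset.mem_sdiff.mp he).2
  have hcardsplit : R.card + H''.card = H.card := Finset.card_sdiff_add_card_eq_card hsub
  rcases R.eq_empty_or_nonempty with hRe | hRne
  · have : R.card = 0 := by simp [hRe]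
    have h1 : H.card = H''.card := by omega
    rw [h1]
    exact Nat.le_mul_of_pos_left _ (by omega)
  -- nonempty R : get a default vertex
  obtain ⟨e0, he0⟩ := hRne
  have he0card : e0.card = 3 := hunif e0 (hRH he0)
  obtain ⟨x0, hx0⟩ := Finset.card_pos.mp (by omega : 0 < e0.card)
  -- triangle data for each removed edge
  have hdata : ∀ e : Finset (Fin n), ∃ (v1 v2 v3 : Fin n) (g2 g3 : Finset (Fin n)), e ∈ R →
      (v1 ≠ v2 ∧ v2 ≠ v3 ∧ v1 ≠ v3 ∧ e ≠ g2 ∧ g2 ≠ g3 ∧ e ≠ g3 ∧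
       g2 ∈ H'' ∧ g3 ∈ H'' ∧ v1 ∈ e ∧ v2 ∈ e ∧ v2 ∈ g2 ∧ v3 ∈ g2 ∧ v3 ∈ g3 ∧ v1 ∈ g3) := by
    intro e
    by_cases he : e ∈ R
    · have heH : e ∈ H := hRH he
      have heH'' : e ∉ H'' := hRH'' e he
      have htr : HasBergeTriangle (insert e H'') := by
        by_contra hcon
        have hmem' : insert e H'' ∈ 𝒮 := by
          rw [h𝒮, Finset.mem_filter, Finset.mem_powerset]
          exact ⟨Finset.insert_subset heH hsub, hcon⟩
        have := hmax _ hmem'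
        rw [Finset.card_insert_of_notMem heH''] at this
        omega
      obtain ⟨v1, v2, v3, g2, g3, props⟩ := triangle_normalize H'' e htf htr
      exact ⟨v1, v2, v3, g2, g3, fun _ => props⟩
    · exact ⟨x0, x0, x0, ∅, ∅, fun h => absurd h he⟩
  choose V1 V2 V3 G2 G3 hprop using hdata
  set Φ₂ : Finset (Fin n) → Finset (Fin n) × Finset (Fin n) :=
    fun e => (G2 e, ({V2 e, V3 e} : Finset (Fin n))) with hΦ₂
  set Φ₃ : Finset (Fin n) → Finset (Fin n) × Finset (Fin n) :=
    fun e => (G3 e, ({V3 e, V1 e} : Finset (Fin n))) with hΦ₃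
  set K : Finset (Finset (Fin n) × Finset (Fin n)) :=
    H''.biUnion (fun f => (Finset.powersetCard 2 f).image (fun p => (f, p))) with hK
  have hKmem : ∀ t, t ∈ K ↔ t.1 ∈ H'' ∧ t.2 ⊆ t.1 ∧ t.2.card = 2 := by
    intro t
    simp only [hK, Finset.mem_biUnion, Finset.mem_image, Finset.mem_powersetCard]
    constructor
    · rintro ⟨f, hf, p, ⟨hp1, hp2⟩, rfl⟩
      exact ⟨hf, hp1, hp2⟩
    · rintro ⟨h1, h2, h3⟩
      exact ⟨t.1, h1, t.2, ⟨h2, h3⟩, rfl⟩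
  have hKcard : K.card = 3 * H''.card := by
    rw [hK, Finset.card_biUnion]
    · rw [Finset.sum_congr rfl (fun f hf => ?_), Finset.sum_const, smul_eq_mul, mul_comm]
      rw [Finset.card_image_of_injective _ (fun p q h => (Prod.mk.injEq _ _ _ _).mp h |>.2),
        Finset.card_powersetCard, hunif f (hsub hf)]
      decide
    · intro f hf g hg hfg
      simp only [Finset.disjoint_left, Finset.mem_image, Finset.mem_powersetCard]
      rintro t ⟨p, hp, rfl⟩ ⟨q, hq, ht⟩
      exact hfg ((Prod.mk.injEq _ _ _ _).mp ht |>.1).symm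
  have hΦ₂K : ∀ e ∈ R, Φ₂ e ∈ K := by
    intro e he
    obtain ⟨n12, n23, n13, e2, e23, e3, hg2, hg3, m1, m2, m3, m4, m5, m6⟩ := hprop e he
    rw [hKmem]
    exact ⟨hg2, by intro y hy; simp [hΦ₂] at hy; rcases hy with rfl | rfl <;> assumption,
      Finset.card_pair n23⟩
  have hΦ₃K : ∀ e ∈ R, Φ₃ e ∈ K := by
    intro e he
    obtain ⟨n12, n23, n13, e2, e23, e3, hg2, hg3, m1, m2, m3, m4, m5, m6⟩ := hprop e he
    rw [hKmem]
    refine ⟨hg3, by intro y hy; simp [hΦ₃] at hy; rcases hy with rfl | rfl <;> assumption,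
      Finset.card_pair (fun h => n13 h.symm)⟩
  have hΦne : ∀ e ∈ R, Φ₂ e ≠ Φ₃ e := by
    intro e he h
    obtain ⟨n12, n23, n13, e2, e23, e3, hg2, hg3, -⟩ := hprop e he
    exact e23 ((Prod.mk.injEq _ _ _ _).mp h).1
  -- the double counting
  have hcount : 2 * R.card ≤ ∑ t ∈ K, (R.filter (fun e => Φ₂ e = t ∨ Φ₃ e = t)).card := by
    have hswap : ∑ t ∈ K, (R.filter (fun e => Φ₂ e = t ∨ Φ₃ e = t)).card
        = ∑ e ∈ R, (K.filter (fun t => Φ₂ e = t ∨ Φ₃ e = t)).card := by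
      simp_rw [Finset.card_filter]
      exact Finset.sum_comm
    rw [hswap]
    have : ∀ e ∈ R, 2 ≤ (K.filter (fun t => Φ₂ e = t ∨ Φ₃ e = t)).card := by
      intro e he
      have hsub2 : ({Φ₂ e, Φ₃ e} : Finset _) ⊆ K.filter (fun t => Φ₂ e = t ∨ Φ₃ e = t) := by
        intro t ht
        simp only [Finset.mem_insert, Finset.mem_singleton] at ht
        rcases ht with rfl | rfl
        · exact Finset.mem_filter.mpr ⟨hΦ₂K e he, Or.inl rfl⟩
        · exact Finset.mem_filter.mpr ⟨hΦ₃K e he, Or.inr rfl⟩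
      calc 2 = ({Φ₂ e, Φ₃ e} : Finset _).card := (Finset.card_pair (hΦne e he)).symm
        _ ≤ _ := Finset.card_le_card hsub2
    calc 2 * R.card = ∑ _e ∈ R, 2 := by rw [Finset.sum_const, smul_eq_mul, mul_comm]
      _ ≤ _ := Finset.sum_le_sum this
  -- the per-pair bound
  have hbound : ∀ t ∈ K, (R.filter (fun e => Φ₂ e = t ∨ Φ₃ e = t)).card ≤ 2 * j := by
    intro t ht
    obtain ⟨hf, hpf, hpcard⟩ := (hKmem t).mp ht
    obtain ⟨u, v, huv, hpuv⟩ := Finset.card_eq_two.mp hpcard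
    have hfH : t.1 ∈ H := hsub hf
    have huf : u ∈ t.1 := hpf (by rw [hpuv]; exact Finset.mem_insert_self _ _)
    have hvf : v ∈ t.1 := hpf (by rw [hpuv]; simp)
    set St := R.filter (fun e => Φ₂ e = t ∨ Φ₃ e = t) with hSt
    by_contra hcon
    push_neg at hcon
    apply hfree
    have hStR : St ⊆ R := Finset.filter_subset _ _
    set apex : Finset (Fin n) → Fin n := fun e => if Φ₂ e = t then V1 e else V2 e with hapex
    have hQ : ∀ e ∈ St, ∃ w w', ({w, w'} : Finset (Fin n)) = t.2 ∧ apex e ∉ t.2 ∧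
        w ∈ e ∧ apex e ∈ e ∧ ∃ c, c ∈ H'' ∧ c ≠ t.1 ∧ apex e ∈ c ∧ w' ∈ c := by
      intro e he
      have heR := hStR he
      obtain ⟨n12, n23, n13, e2g, e23g, e3g, hg2, hg3, m1, m2, m3, m4, m5, m6⟩ := hprop e heR
      have hcases := (Finset.mem_filter.mp he).2
      by_cases hc : Φ₂ e = t
      · have h1 : G2 e = t.1 := congrArg Prod.fst hc
        have h2 : ({V2 e, V3 e} : Finset (Fin n)) = t.2 := congrArg Prod.snd hc
        have hax : apex e = V1 e := by simp only [hapex]; rw [if_pos hc]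
        refine ⟨V2 e, V3 e, h2, ?_, m2, ?_, G3 e, hg3, ?_, ?_, m5⟩
        · rw [hax, ← h2]
          simp only [Finset.mem_insert, Finset.mem_singleton]
          push_neg
          exact ⟨n12, n13⟩
        · rw [hax]; exact m1
        · rw [← h1]; exact fun h => e23g h.symm
        · rw [hax]; exact m6
      · have hc3 : Φ₃ e = t := hcases.resolve_left hc
        have h1 : G3 e = t.1 := congrArg Prod.fst hc3
        have h2 : ({V3 e, V1 e} : Finset (Fin n)) = t.2 := congrArg Prod.snd hc3
        have hax : apex e = V2 e := by simp only [hapex]; rw [if_neg hc]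
        refine ⟨V1 e, V3 e, ?_, ?_, m1, ?_, G2 e, hg2, ?_, ?_, m4⟩
        · rw [← h2]; exact Finset.pair_comm _ _
        · rw [hax, ← h2]
          simp only [Finset.mem_insert, Finset.mem_singleton]
          push_neg
          exact ⟨n23, fun h => n12 h.symm⟩
        · rw [hax]; exact m2
        · rw [← h1]; exact e23g
        · rw [hax]; exact m3
    have hApexInj : ∀ e ∈ St, ∀ e' ∈ St, apex e = apex e' → e = e' := by
      intro e he e' he' hae
      obtain ⟨w1, w1', hw1p, hnp1, hw1e, hxe, c1, hc1H, hc1f, hxc1, hw1'c1⟩ := hQ e he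
      obtain ⟨w2, w2', hw2p, hnp2, hw2e, hxe', c2, hc2H, hc2f, hxc2, hw2'c2⟩ := hQ e' he'
      have heH : e ∈ H := hRH (hStR he)
      have heH' : e' ∈ H := hRH (hStR he')
      have hw1t : w1 ∈ t.2 := by rw [← hw1p]; exact Finset.mem_insert_self _ _
      have hw1't : w1' ∈ t.2 := by rw [← hw1p]; simp
      have hxw1 : apex e ≠ w1 := fun h => hnp1 (h ▸ hw1t)
      by_contra hne
      by_cases hww : w1 = w2
      · have hsub2 : ({apex e, w1} : Finset (Fin n)) ⊆ e ∩ e' := by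
          intro y hy
          simp only [Finset.mem_insert, Finset.mem_singleton] at hy
          rcases hy with rfl | rfl
          · exact Finset.mem_inter.mpr ⟨hxe, hae ▸ hxe'⟩
          · exact Finset.mem_inter.mpr ⟨hw1e, hww ▸ hw2e⟩
        have h2 := Finset.card_le_card hsub2
        rw [Finset.card_pair hxw1] at h2
        have := hlin e heH e' heH' hne
        omega
      · have hw2mem : w2 ∈ ({w1, w1'} : Finset (Fin n)) := by
          rw [hw1p, ← hw2p]; exact Finset.mem_insert_self _ _
        have hw2w1' : w2 = w1' := by
          rcases Finset.mem_insert.mp hw2mem with h | h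
          · exact absurd h (fun hh => hww hh.symm)
          · exact Finset.mem_singleton.mp h
        have hxw1' : apex e' ≠ w1' := fun h => hnp2 (h ▸ hw1't)
        have hec1 : e' ≠ c1 := fun h => (hRH'' e' (hStR he')) (h ▸ hc1H)
        have hsub2 : ({apex e', w1'} : Finset (Fin n)) ⊆ e' ∩ c1 := by
          intro y hy
          simp only [Finset.mem_insert, Finset.mem_singleton] at hy
          rcases hy with rfl | rfl
          · exact Finset.mem_inter.mpr ⟨hxe', hae ▸ hxc1⟩
          · exact Finset.mem_inter.mpr ⟨hw2w1' ▸ hw2e, hw1'c1⟩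
        have h2 := Finset.card_le_card hsub2
        rw [Finset.card_pair hxw1'] at h2
        have := hlin e' heH' c1 (hsub hc1H) hec1
        omega
    set X := St.image apex with hX
    have hXcard : 2 * j + 1 ≤ X.card := by
      rw [hX, Finset.card_image_of_injOn (fun e he e' he' h => hApexInj e he e' he' h)]
      omega
    have hXdata : ∀ x : Fin n, ∃ a b : Finset (Fin n), x ∈ X →
        (x ≠ u ∧ x ≠ v ∧ a ∈ H ∧ a ≠ t.1 ∧ u ∈ a ∧ x ∈ a ∧
         b ∈ H ∧ b ≠ t.1 ∧ v ∈ b ∧ x ∈ b) := by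
      intro x
      by_cases hx : x ∈ X
      · obtain ⟨e, he, rfl⟩ := Finset.mem_image.mp hx
        obtain ⟨w, w', hwp, hnp, hwe, hxe, c, hcH, hcf, hxc, hw'c⟩ := hQ e he
        have hxu : apex e ≠ u := fun h => hnp (by rw [hpuv, h]; exact Finset.mem_insert_self _ _)
        have hxv : apex e ≠ v := fun h => hnp (by rw [hpuv, h]; simp)
        have hwuv : w ∈ ({u, v} : Finset (Fin n)) := by
          rw [← hpuv, ← hwp]; exact Finset.mem_insert_self _ _
        have hw'uv : w' ∈ ({u, v} : Finset (Fin n)) := by rw [← hpuv, ← hwp]; simp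
        have hvw : v ∈ ({w, w'} : Finset (Fin n)) := by rw [hwp, hpuv]; simp
        have huw : u ∈ ({w, w'} : Finset (Fin n)) := by
          rw [hwp, hpuv]; exact Finset.mem_insert_self _ _
        have heH : e ∈ H := hRH (hStR he)
        have hef : e ≠ t.1 := fun h => (hRH'' e (hStR he)) (h ▸ hf)
        rcases Finset.mem_insert.mp hwuv with hwu | hwv
        · -- w = u, so w' = v
          have hw'v : w' = v := by
            rcases Finset.mem_insert.mp hw'uv with h | h
            · exfalso
              rcases Finset.mem_insert.mp hvw with h2 | h2
              · exact huv (h2.trans hwu).symm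
              · exact huv ((Finset.mem_singleton.mp h2).trans h).symm
            · exact Finset.mem_singleton.mp h
          exact ⟨e, c, fun _ => ⟨hxu, hxv, heH, hef, hwu ▸ hwe, hxe,
            hsub hcH, hcf, hw'v ▸ hw'c, hxc⟩⟩
        · have hwv' : w = v := Finset.mem_singleton.mp hwv
          have hw'u : w' = u := by
            rcases Finset.mem_insert.mp hw'uv with h | h
            · exact h
            · exfalso
              rcases Finset.mem_insert.mp huw with h2 | h2
              · exact huv (h2.trans hwv')
              · exact huv ((Finset.mem_singleton.mp h2).trans (Finset.mem_singleton.mp h))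
          exact ⟨c, e, fun _ => ⟨hxu, hxv, hsub hcH, hcf, hw'u ▸ hw'c, hxc,
            heH, hef, hwv' ▸ hwe, hxe⟩⟩
      · exact ⟨∅, ∅, fun h => absurd h hx⟩
    choose A B hABp using hXdata
    have hfibA : ∀ x ∈ X, (X.filter (fun y => A y = A x)).card ≤ 2 := by
      intro x hx
      have hsub2 : X.filter (fun y => A y = A x) ⊆ (A x).erase u := by
        intro y hy
        obtain ⟨hyX, hyA⟩ := Finset.mem_filter.mp hy
        obtain ⟨hyu, _, _, _, _, hyin, _⟩ := hABp y hyX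
        exact Finset.mem_erase.mpr ⟨hyu, hyA ▸ hyin⟩
      have h2 := Finset.card_le_card hsub2
      obtain ⟨_, _, hAH, _, huA, _⟩ := hABp x hx
      rw [Finset.card_erase_of_mem huA, hunif _ hAH] at h2
      omega
    have hfibB : ∀ x ∈ X, (X.filter (fun y => B y = B x)).card ≤ 2 := by
      intro x hx
      have hsub2 : X.filter (fun y => B y = B x) ⊆ (B x).erase v := by
        intro y hy
        obtain ⟨hyX, hyB⟩ := Finset.mem_filter.mp hy
        obtain ⟨_, hyv, _, _, _, _, _, _, _, hyin⟩ := hABp y hyX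
        exact Finset.mem_erase.mpr ⟨hyv, hyB ▸ hyin⟩
      have h2 := Finset.card_le_card hsub2
      obtain ⟨_, _, _, _, _, _, hBH, _, hvB, _⟩ := hABp x hx
      rw [Finset.card_erase_of_mem hvB, hunif _ hBH] at h2
      omega
    have hcross : ∀ x ∈ X, ∀ y ∈ X, A x ≠ B y := by
      intro x hx y hy hAB
      obtain ⟨_, _, hAH, hAf, huA, _⟩ := hABp x hx
      obtain ⟨_, _, _, _, _, _, hBH, hBf, hvB, _⟩ := hABp y hy
      have hsub2 : ({u, v} : Finset (Fin n)) ⊆ A x ∩ t.1 := by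
        intro z hz
        simp only [Finset.mem_insert, Finset.mem_singleton] at hz
        rcases hz with rfl | rfl
        · exact Finset.mem_inter.mpr ⟨huA, huf⟩
        · exact Finset.mem_inter.mpr ⟨hAB ▸ hvB, hvf⟩
      have h2 := Finset.card_le_card hsub2
      rw [Finset.card_pair huv] at h2
      have := hlin (A x) hAH t.1 hfH hAf
      omega
    obtain ⟨T, hTX, hTcard, hIA, hIB⟩ := matching_lemma X.card X A B le_rfl hfibA hfibB hcross
    have hTk : j + 1 ≤ T.card := by omega
    obtain ⟨T', hT'T, hT'card⟩ := Finset.exists_subset_card_eq hTk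
    set xm : Fin (j + 1) → Fin n := fun i => (T'.orderIsoOfFin hT'card i : Fin n) with hxm
    have hxmT : ∀ i, xm i ∈ T := fun i => hT'T (T'.orderIsoOfFin hT'card i).2
    have hxmX : ∀ i, xm i ∈ X := fun i => hTX (hxmT i)
    have hxminj : Function.Injective xm := fun i i' h => by
      have := (T'.orderIsoOfFin hT'card).injective (Subtype.ext h)
      exact this
    refine ⟨u, v, xm, t.1, fun i => A (xm i), fun i => B (xm i), huv, hxminj, ?_, hfH, huf, hvf,
      ?_, ?_, ?_, ?_, ?_⟩
    · intro i
      obtain ⟨h1, h2, _⟩ := hABp (xm i) (hxmX i)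
      exact ⟨h1, h2⟩
    · intro i
      obtain ⟨_, _, hAH, _, huA, hxA, hBH, _, hvB, hxB⟩ := hABp (xm i) (hxmX i)
      exact ⟨hAH, hBH, huA, hxA, hvB, hxB⟩
    · intro i i' h
      exact hxminj (hIA (Finset.mem_coe.mpr (hxmT i)) (Finset.mem_coe.mpr (hxmT i')) h)
    · intro i i' h
      exact hxminj (hIB (Finset.mem_coe.mpr (hxmT i)) (Finset.mem_coe.mpr (hxmT i')) h)
    · intro i i'
      exact hcross (xm i) (hxmX i) (xm i') (hxmX i')
    · intro i
      obtain ⟨_, _, _, hAf, _, _, _, hBf, _⟩ := hABp (xm i) (hxmX i)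
      exact ⟨fun h => hAf h.symm, fun h => hBf h.symm⟩
  -- conclude
  have hfinal : 2 * R.card ≤ 3 * H''.card * (2 * j) := by
    calc 2 * R.card ≤ ∑ t ∈ K, (R.filter (fun e => Φ₂ e = t ∨ Φ₃ e = t)).card := hcount
      _ ≤ ∑ _t ∈ K, 2 * j := Finset.sum_le_sum hbound
      _ = K.card * (2 * j) := by rw [Finset.sum_const, smul_eq_mul]
      _ = 3 * H''.card * (2 * j) := by rw [hKcard]
  have h6 : 3 * H''.card * (2 * j) = 6 * (j * H''.card) := by ring
  have h7 : (3 * j + 1) * H''.card = 3 * (j * H''.card) + H''.card := by ring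
  omega
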